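/- For every n ≥ 2 and every subset A of L, the space (X, τ(A)) is locally compact if and only if A = L (equivalently, if and only if τ(A) is the Euclidean subspace topology on X). -/

import Mathlib

open Metric Set TopologicalSpace

noncomputable section

/-- The last coordinate `x (n-1)` of a point of `EuclideanSpace ℝ (Fin n)`
(junk value `0` if `n = 0`). -/
def lastCoord (n : ℕ) (x : EuclideanSpace ℝ (Fin n)) : ℝ :=
  if h : 0 < n then x ⟨n - 1, Nat.sub_lt h one_pos⟩ else 0

/-- The closed upper half-space `X = {x : x (n-1) ≥ 0}`. -/
def HalfSpace (n : ℕ) : Set (EuclideanSpace ℝ (Fin n)) := {x | 0 ≤ lastCoord n x}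

/-- The open upper half-space `P = {x : x (n-1) > 0}`. -/
def OpenHalf (n : ℕ) : Set (EuclideanSpace ℝ (Fin n)) := {x | 0 < lastCoord n x}

/-- The boundary hyperplane `L = {x : x (n-1) = 0}`. -/
def Bdry (n : ℕ) : Set (EuclideanSpace ℝ (Fin n)) := {x | lastCoord n x = 0}

/-- The `n`-th standard basis vector `e` (junk value `0` if `n = 0`). -/
def eVec (n : ℕ) : EuclideanSpace ℝ (Fin n) :=
  if h : 0 < n then EuclideanSpace.single ⟨n - 1, Nat.sub_lt h one_pos⟩ (1 : ℝ) else 0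

/-- The tangent ball `B̃(a, ε) = {a} ∪ B(a + ε • e, ε)`. -/
def tangentBall (n : ℕ) (a : EuclideanSpace ℝ (Fin n)) (ε : ℝ) :
    Set (EuclideanSpace ℝ (Fin n)) :=
  {a} ∪ ball (a + ε • eVec n) ε

/-- The generating family for the topology `τ(A)` on `X`:
balls `B(a,ε)` with `a ∈ P`, `0 < ε < a (n-1)`; traces `B(a,ε) ∩ X` with `a ∈ A`, `ε > 0`;
and tangent balls `B̃(a,ε)` with `a ∈ L \ A`, `ε > 0`. -/
def niemGen (n : ℕ) (A : Set (EuclideanSpace ℝ (Fin n))) : Set (Set (HalfSpace n)) :=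
  {s | ∃ a ∈ OpenHalf n, ∃ ε, 0 < ε ∧ ε < lastCoord n a ∧
      s = Subtype.val ⁻¹' ball a ε} ∪
  {s | ∃ a ∈ A, ∃ ε, 0 < ε ∧ s = Subtype.val ⁻¹' ball a ε} ∪
  {s | ∃ a ∈ Bdry n \ A, ∃ ε, 0 < ε ∧ s = Subtype.val ⁻¹' tangentBall n a ε}

/-- The topology `τ(A)` on `X`; `τ(∅)` is the Niemytzki topology `τ_N`. -/
def tau (n : ℕ) (A : Set (EuclideanSpace ℝ (Fin n))) : TopologicalSpace (HalfSpace n) :=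
  generateFrom (niemGen n A)

/-- The inclusion of `L` into `X`. -/
def inclLX (n : ℕ) (x : Bdry n) : HalfSpace n := ⟨x.1, le_of_eq x.2.symm⟩

/-- The subspace topology `τ(A)|_L` on `L` induced from `(X, τ(A))`. -/
def tauL (n : ℕ) (A : Set (EuclideanSpace ℝ (Fin n))) : TopologicalSpace (Bdry n) :=
  TopologicalSpace.induced (inclLX n) (tau n A)

/-- A space is perfect if every closed set is a `Gδ`-set. -/
def IsPerfectSpace (X : Type*) [TopologicalSpace X] : Prop :=
  ∀ s : Set X, IsClosed s → IsGδ s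

/-- An `Fσ`-set: a countable union of closed sets. -/
def IsFsigma {X : Type*} [TopologicalSpace X] (s : Set X) : Prop :=
  ∃ F : ℕ → Set X, (∀ i, IsClosed (F i)) ∧ s = ⋃ i, F i

/-- Countably paracompact: every countable open cover admits a locally finite open refinement. -/
def CountablyParacompact (X : Type*) [TopologicalSpace X] : Prop :=
  ∀ u : ℕ → Set X, (∀ i, IsOpen (u i)) → (⋃ i, u i) = Set.univ →
    ∃ (ι : Type) (v : ι → Set X), (∀ j, IsOpen (v j)) ∧ (⋃ j, v j) = Set.univ ∧
      LocallyFinite v ∧ ∀ j, ∃ i, v j ⊆ u i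

/-- A zero set: the zero locus of a continuous real-valued function. -/
def IsZeroSet {X : Type*} [TopologicalSpace X] (s : Set X) : Prop :=
  ∃ f : X → ℝ, Continuous f ∧ s = f ⁻¹' {0}

/-- `Y` is z-embedded in `X` if every zero set of the subspace `Y`
is the trace on `Y` of a zero set of `X`. -/
def ZEmbedded {X : Type*} [TopologicalSpace X] (Y : Set X) : Prop :=
  ∀ s : Set Y, IsZeroSet s → ∃ Z : Set X, IsZeroSet Z ∧ s = Subtype.val ⁻¹' Z

/-- `Y` is `C*`-embedded in `X` if every bounded continuous real-valued function on the
subspace `Y` extends to a bounded continuous function on `X`. -/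
def CStarEmbedded {X : Type*} [TopologicalSpace X] (Y : Set X) : Prop :=
  ∀ f : Y → ℝ, Continuous f → (∃ M, ∀ y, |f y| ≤ M) →
    ∃ g : X → ℝ, Continuous g ∧ (∃ M, ∀ x, |g x| ≤ M) ∧ ∀ y : Y, g ↑y = f y
end
set_option linter.unusedVariables false in
section
open Topology

section AuxTest
variable {n : ℕ}

lemma aux_lastCoord_def (h : 0 < n) (x : EuclideanSpace ℝ (Fin n)) :
    lastCoord n x = x ⟨n - 1, Nat.sub_lt h one_pos⟩ := dif_pos h

lemma aux_eVec_def (h : 0 < n) :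
    eVec n = EuclideanSpace.single ⟨n - 1, Nat.sub_lt h one_pos⟩ (1 : ℝ) := dif_pos h

lemma aux_dist_coord_le (x y : EuclideanSpace ℝ (Fin n)) (i : Fin n) :
    dist (x i) (y i) ≤ dist x y := by
  rw [EuclideanSpace.dist_eq, ← Real.sqrt_sq (dist_nonneg (x := x i) (y := y i))]
  exact Real.sqrt_le_sqrt (Finset.single_le_sum (f := fun j => dist (x j) (y j) ^ 2)
    (fun j _ => sq_nonneg _) (Finset.mem_univ i))

lemma aux_dist_lastCoord_le (x y : EuclideanSpace ℝ (Fin n)) :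
    dist (lastCoord n x) (lastCoord n y) ≤ dist x y := by
  rcases Nat.eq_zero_or_pos n with h | h
  · simp [lastCoord, h, dist_nonneg]
  · rw [aux_lastCoord_def h, aux_lastCoord_def h]; exact aux_dist_coord_le x y _

lemma aux_lastCoord_add (x y : EuclideanSpace ℝ (Fin n)) :
    lastCoord n (x + y) = lastCoord n x + lastCoord n y := by
  rcases Nat.eq_zero_or_pos n with h | h
  · simp [lastCoord, h]
  · simp only [aux_lastCoord_def h]; rfl

lemma aux_lastCoord_smul_eVec (h : 0 < n) (c : ℝ) :
    lastCoord n (c • eVec n) = c := by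
  simp only [aux_lastCoord_def h, aux_eVec_def h]
  simp [EuclideanSpace.single_apply]

lemma aux_norm_eVec (h : 0 < n) : ‖eVec n‖ = 1 := by
  rw [aux_eVec_def h, EuclideanSpace.norm_single]; norm_num

lemma aux_dist_add_smul (h : 0 < n) (a : EuclideanSpace ℝ (Fin n)) (c : ℝ) :
    dist (a + c • eVec n) a = |c| := by
  rw [dist_eq_norm]
  simp [norm_smul, aux_norm_eVec h]

end AuxTest

section Aux2
variable {n : ℕ}

lemma aux_tangentBall_subset_ball (h : 0 < n) {a : EuclideanSpace ℝ (Fin n)} {ε : ℝ}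
    (hε : 0 < ε) : tangentBall n a ε ⊆ ball a (2 * ε) := by
  rintro y (rfl | hy)
  · exact mem_ball_self (by linarith)
  · have h1 : dist y a ≤ dist y (a + ε • eVec n) + dist (a + ε • eVec n) a := dist_triangle _ _ _
    rw [aux_dist_add_smul h, abs_of_pos hε] at h1
    rw [mem_ball] at hy ⊢
    linarith

lemma aux_tangentBall_mono (h : 0 < n) {a : EuclideanSpace ℝ (Fin n)} {δ ε : ℝ}
    (hδε : δ ≤ ε) : tangentBall n a δ ⊆ tangentBall n a ε := by
  rintro y (rfl | hy)
  · exact Or.inl rfl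
  · right
    rw [mem_ball] at hy ⊢
    have h1 : dist y (a + ε • eVec n) ≤ dist y (a + δ • eVec n) + dist (a + δ • eVec n) (a + ε • eVec n) :=
      dist_triangle _ _ _
    have h2 : dist (a + δ • eVec n) (a + ε • eVec n) = ε - δ := by
      rw [dist_eq_norm]
      have : a + δ • eVec n - (a + ε • eVec n) = (δ - ε) • eVec n := by module
      rw [this, norm_smul, aux_norm_eVec h]
      simp [abs_of_nonpos (by linarith : δ - ε ≤ 0)]
    linarith

lemma aux_lastCoord_pos_of_mem_ball (h : 0 < n) {a y : EuclideanSpace ℝ (Fin n)} {ε : ℝ}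
    (ha : lastCoord n a = 0) (hy : y ∈ ball (a + ε • eVec n) ε) : 0 < lastCoord n y := by
  have h1 : dist (lastCoord n y) (lastCoord n (a + ε • eVec n)) ≤ dist y (a + ε • eVec n) :=
    aux_dist_lastCoord_le _ _
  rw [aux_lastCoord_add, ha, aux_lastCoord_smul_eVec h, zero_add] at h1
  rw [mem_ball] at hy
  have := abs_sub_lt_iff.1 (lt_of_le_of_lt (by rw [Real.dist_eq] at h1; exact h1) hy)
  linarith [this.2]

lemma aux_mem_tangentBall_self (n : ℕ) (a : EuclideanSpace ℝ (Fin n)) (ε : ℝ) :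
    a ∈ tangentBall n a ε := Or.inl rfl

end Aux2

noncomputable def wVec (n : ℕ) : EuclideanSpace ℝ (Fin n) :=
  if h : 0 < n then EuclideanSpace.single ⟨0, h⟩ (1 : ℝ) else 0

section Aux3
variable {n : ℕ}

lemma aux_idx_ne (hn : 2 ≤ n) :
    (⟨0, by omega⟩ : Fin n) ≠ ⟨n - 1, by omega⟩ := by
  simp only [ne_eq, Fin.mk.injEq]
  omega

lemma aux_wVec_def (hn : 2 ≤ n) :
    wVec n = EuclideanSpace.single (⟨0, by omega⟩ : Fin n) (1 : ℝ) := dif_pos (by omega)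

lemma aux_lastCoord_wVec (hn : 2 ≤ n) : lastCoord n (wVec n) = 0 := by
  rw [aux_lastCoord_def (by omega : 0 < n), aux_wVec_def hn]
  rw [EuclideanSpace.single_apply]
  simp [(aux_idx_ne hn).symm]

lemma aux_lastCoord_smul_wVec (hn : 2 ≤ n) (c : ℝ) : lastCoord n (c • wVec n) = 0 := by
  have h0 : lastCoord n (wVec n) = 0 := aux_lastCoord_wVec hn
  rw [aux_lastCoord_def (by omega : 0 < n)] at h0 ⊢
  show c * (wVec n) _ = 0
  rw [h0, mul_zero]

lemma aux_inner_wVec_eVec (hn : 2 ≤ n) : inner ℝ (wVec n) (eVec n) = (0 : ℝ) := by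
  rw [aux_wVec_def hn, aux_eVec_def (by omega : 0 < n), EuclideanSpace.inner_single_left]
  rw [EuclideanSpace.single_apply]
  simp [aux_idx_ne hn]

lemma aux_norm_combo (hn : 2 ≤ n) (t c : ℝ) :
    ‖t • wVec n + c • eVec n‖ ^ 2 = t ^ 2 + c ^ 2 := by
  have hpos : 0 < n := by omega
  rw [norm_add_sq_real, real_inner_smul_left, real_inner_smul_right, aux_inner_wVec_eVec hn]
  rw [norm_smul, norm_smul, aux_norm_eVec hpos]
  have : ‖wVec n‖ = 1 := by rw [aux_wVec_def hn, EuclideanSpace.norm_single]; norm_num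
  rw [this]
  simp [mul_pow, sq_abs]

lemma aux_dist_combo (hn : 2 ≤ n) (a : EuclideanSpace ℝ (Fin n)) (t s c : ℝ) :
    dist (a + t • wVec n + s • eVec n) (a + c • eVec n) ^ 2 = t ^ 2 + (s - c) ^ 2 := by
  rw [dist_eq_norm]
  have : a + t • wVec n + s • eVec n - (a + c • eVec n) = t • wVec n + (s - c) • eVec n := by
    module
  rw [this, aux_norm_combo hn]

end Aux3


section Aux4
variable {n : ℕ}

lemma aux_isOpen_of_gen {α : Type*} {g : Set (Set α)} {U : Set α}
    (h : ∀ x ∈ U, ∃ s ∈ g, x ∈ s ∧ s ⊆ U) : IsOpen[generateFrom g] U := by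
  have hU : U = ⋃₀ {s | s ∈ g ∧ s ⊆ U} := by
    ext x
    constructor
    · intro hx
      obtain ⟨s, hs, hxs, hsU⟩ := h x hx
      exact ⟨s, ⟨hs, hsU⟩, hxs⟩
    · rintro ⟨s, ⟨-, hsU⟩, hxs⟩
      exact hsU hxs
  rw [hU]
  exact GenerateOpen.sUnion _ (fun s hs => GenerateOpen.basic s hs.1)

/-- `τ(A)` is finer than the Euclidean subspace topology. -/
lemma aux_tau_le (hn : 0 < n) (A : Set (EuclideanSpace ℝ (Fin n))) :
    tau n A ≤ (inferInstance : TopologicalSpace (HalfSpace n)) := by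
  intro U hU
  rw [isOpen_induced_iff] at hU
  obtain ⟨W, hW, rfl⟩ := hU
  apply aux_isOpen_of_gen
  rintro ⟨x, hx⟩ hxW
  rw [Set.mem_preimage] at hxW
  obtain ⟨r, hr, hball⟩ := (Metric.isOpen_iff.1 hW) x hxW
  have hsub : ∀ (t : Set (EuclideanSpace ℝ (Fin n))), t ⊆ ball x r →
      (Subtype.val ⁻¹' t : Set (HalfSpace n)) ⊆ Subtype.val ⁻¹' W := by
    intro t ht y hy
    rw [Set.mem_preimage] at hy ⊢
    exact hball (ht hy)
  rcases lt_or_eq_of_le (show (0:ℝ) ≤ lastCoord n x from hx) with hpos | hzero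
  · -- interior point
    set q : ℝ := min (r / 2) (lastCoord n x / 2) with hq
    have hqpos : 0 < q := lt_min (by linarith) (by linarith)
    have hqlt : q < lastCoord n x := lt_of_le_of_lt (min_le_right _ _) (by linarith)
    have hmem : Subtype.val ⁻¹' ball x q ∈ niemGen n A := by
      rw [niemGen, Set.mem_union, Set.mem_union]
      exact Or.inl (Or.inl ⟨x, hpos, q, hqpos, hqlt, rfl⟩)
    refine ⟨_, hmem, ?_, hsub _ (ball_subset_ball (le_trans (min_le_left _ _) (by linarith)))⟩
    rw [Set.mem_preimage]
    exact mem_ball_self hqpos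
  · -- boundary point
    by_cases hxA : x ∈ A
    · have hmem : Subtype.val ⁻¹' ball x r ∈ niemGen n A := by
        rw [niemGen, Set.mem_union, Set.mem_union]
        exact Or.inl (Or.inr ⟨x, hxA, r, hr, rfl⟩)
      refine ⟨_, hmem, ?_, hsub _ subset_rfl⟩
      rw [Set.mem_preimage]
      exact mem_ball_self hr
    · have hmem : Subtype.val ⁻¹' tangentBall n x (r / 2) ∈ niemGen n A := by
        rw [niemGen, Set.mem_union, Set.mem_union]
        exact Or.inr ⟨x, ⟨hzero.symm, hxA⟩, r / 2, by linarith, rfl⟩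
      refine ⟨_, hmem, ?_, hsub _ ?_⟩
      · rw [Set.mem_preimage]
        exact aux_mem_tangentBall_self n x _
      · intro y hy
        have := aux_tangentBall_subset_ball hn (by linarith : (0:ℝ) < r / 2) hy
        rwa [show 2 * (r / 2) = r by ring] at this

/-- With `A = Bdry n`, `τ(A)` equals the Euclidean subspace topology. -/
lemma aux_tau_bdry (hn : 0 < n) :
    tau n (Bdry n) = (inferInstance : TopologicalSpace (HalfSpace n)) := by
  refine le_antisymm (aux_tau_le hn _) (le_generateFrom ?_)
  rintro s ((⟨a, -, ε, -, -, rfl⟩ | ⟨a, -, ε, -, rfl⟩) | ⟨a, ⟨ha, ha'⟩, ε, -, rfl⟩)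
  · exact isOpen_ball.preimage continuous_subtype_val
  · exact isOpen_ball.preimage continuous_subtype_val
  · exact absurd ha ha'

end Aux4

section Aux5
variable {n : ℕ}

lemma aux_exists_tangent_subset (hn : 2 ≤ n) {A : Set (EuclideanSpace ℝ (Fin n))}
    {a : EuclideanSpace ℝ (Fin n)} (ha : lastCoord n a = 0) (haA : a ∉ A)
    (ha' : a ∈ HalfSpace n) :
    ∀ V : Set (HalfSpace n), IsOpen[tau n A] V → (⟨a, ha'⟩ : HalfSpace n) ∈ V →
      ∃ ε > 0, (Subtype.val ⁻¹' tangentBall n a ε : Set (HalfSpace n)) ⊆ V := by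
  have hpos : 0 < n := by omega
  intro V hV
  induction hV with
  | basic s hs =>
    intro hmem
    rw [niemGen, Set.mem_union, Set.mem_union] at hs
    rcases hs with (⟨b, hb, ε', hε', hε'lt, rfl⟩ | ⟨b, hbA, ε', hε', rfl⟩) |
        ⟨b, ⟨hbB, hbA⟩, ε', hε', rfl⟩
    · -- type 1: impossible
      exfalso
      rw [Set.mem_preimage] at hmem
      rw [mem_ball] at hmem
      have hmem' : dist a b < ε' := hmem
      have h1 : |lastCoord n a - lastCoord n b| ≤ dist a b := by
        rw [← Real.dist_eq]; exact aux_dist_lastCoord_le a b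
      rw [ha, zero_sub, abs_neg, abs_of_pos hb] at h1
      linarith
    · -- type 2
      rw [Set.mem_preimage, mem_ball] at hmem
      have hmem' : dist a b < ε' := hmem
      refine ⟨(ε' - dist a b) / 3, by linarith, ?_⟩
      rintro ⟨y, hy⟩ hyt
      rw [Set.mem_preimage] at hyt ⊢
      rw [mem_ball]
      have h2 : y ∈ ball a (2 * ((ε' - dist a b) / 3)) :=
        aux_tangentBall_subset_ball hpos (by linarith) hyt
      rw [mem_ball] at h2
      have h3 := dist_triangle y a b
      show dist y b < ε'
      linarith
    · -- type 3
      rw [Set.mem_preimage] at hmem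
      have hmem' : a ∈ tangentBall n b ε' := hmem
      rcases hmem' with hab | hmem2
      · rw [Set.mem_singleton_iff] at hab
        subst hab
        exact ⟨ε', hε', subset_rfl⟩
      · exact absurd (aux_lastCoord_pos_of_mem_ball hpos hbB hmem2) (by rw [ha]; exact lt_irrefl 0)
  | univ => exact fun _ => ⟨1, one_pos, fun y _ => trivial⟩
  | inter s t hs ht ihs iht =>
    intro hmem
    obtain ⟨ε₁, hε₁, h₁⟩ := ihs hmem.1
    obtain ⟨ε₂, hε₂, h₂⟩ := iht hmem.2
    refine ⟨min ε₁ ε₂, lt_min hε₁ hε₂, fun y hy => ⟨h₁ ?_, h₂ ?_⟩⟩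
    · exact aux_tangentBall_mono hpos (min_le_left _ _) hy
    · exact aux_tangentBall_mono hpos (min_le_right _ _) hy
  | sUnion S hS ih =>
    intro hmem
    obtain ⟨s, hsS, hmems⟩ := hmem
    obtain ⟨ε, hε, h⟩ := ih s hsS hmems
    exact ⟨ε, hε, h.trans (subset_sUnion_of_mem hsS)⟩

end Aux5

section Aux6
variable {n : ℕ}

lemma aux_not_lc (hn : 2 ≤ n) {A : Set (EuclideanSpace ℝ (Fin n))}
    {a : EuclideanSpace ℝ (Fin n)} (haB : a ∈ Bdry n) (haA : a ∉ A) :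
    ¬ @LocallyCompactSpace (HalfSpace n) (tau n A) := by
  have hpos : 0 < n := by omega
  have ha : lastCoord n a = 0 := haB
  have ha' : a ∈ HalfSpace n := le_of_eq ha.symm
  intro hLC
  obtain ⟨K, hKnhds, -, hKcomp⟩ :=
    hLC.local_compact_nhds (⟨a, ha'⟩ : HalfSpace n) univ Filter.univ_mem
  rw [@mem_nhds_iff (HalfSpace n) (tau n A) (⟨a, ha'⟩ : HalfSpace n) K] at hKnhds
  obtain ⟨V, hVK, hVopen, haV⟩ := hKnhds
  obtain ⟨ε, hε, hTV⟩ := aux_exists_tangent_subset hn ha haA ha' V hVopen haV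
  -- the test sequence
  set t : ℕ → ℝ := fun k => ε / (2 * (k + 1)) with htdef
  set s : ℕ → ℝ := fun k => t k ^ 2 / ε with hsdef
  have htpos : ∀ k, 0 < t k := fun k => by positivity
  have htlt : ∀ k, t k < ε := by
    intro k
    rw [htdef]
    rw [div_lt_iff₀ (by positivity)]
    nlinarith [htpos k, (Nat.cast_nonneg k : (0:ℝ) ≤ k)]
  have hst : ∀ k, s k * ε = t k ^ 2 := fun k => div_mul_cancel₀ _ (ne_of_gt hε)
  have hspos : ∀ k, 0 < s k := fun k => by
    rw [hsdef]; positivity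
  have hslt : ∀ k, s k < t k := by
    intro k
    rw [hsdef, div_lt_iff₀ hε, pow_two]
    exact mul_lt_mul_of_pos_left (htlt k) (htpos k)
  set q : ℕ → EuclideanSpace ℝ (Fin n) := fun k => a + t k • wVec n + s k • eVec n with hqdef
  have hlastq : ∀ k, lastCoord n (q k) = s k := by
    intro k
    rw [hqdef]
    simp only [aux_lastCoord_add, ha, aux_lastCoord_smul_wVec hn, aux_lastCoord_smul_eVec hpos]
    ring
  have hqH : ∀ k, q k ∈ HalfSpace n := by
    intro k
    show 0 ≤ lastCoord n (q k)
    rw [hlastq k]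
    exact le_of_lt (hspos k)
  have hqne : ∀ k, q k ≠ a := by
    intro k h
    have := hlastq k
    rw [h, ha] at this
    exact absurd this.symm (ne_of_gt (hspos k))
  have hbig : ∀ k, q k ∈ ball (a + ε • eVec n) ε := by
    intro k
    rw [mem_ball]
    have hd2 : dist (q k) (a + ε • eVec n) ^ 2 = t k ^ 2 + (s k - ε) ^ 2 :=
      aux_dist_combo hn a (t k) (s k) ε
    have hlt2 : dist (q k) (a + ε • eVec n) ^ 2 < ε ^ 2 := by
      rw [hd2]
      nlinarith [hst k, hslt k, hspos k, htpos k]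
    exact lt_of_pow_lt_pow_left₀ 2 (le_of_lt hε) hlt2
  have hnothalf : ∀ k, q k ∉ ball (a + (ε / 2) • eVec n) (ε / 2) := by
    intro k hk
    rw [mem_ball] at hk
    have hd2 : dist (q k) (a + (ε / 2) • eVec n) ^ 2 = t k ^ 2 + (s k - ε / 2) ^ 2 :=
      aux_dist_combo hn a (t k) (s k) (ε / 2)
    have := pow_lt_pow_left₀ hk dist_nonneg (two_ne_zero)
    rw [hd2] at this
    nlinarith [hst k, hspos k]
  have hqtendsto : Filter.Tendsto q Filter.atTop (nhds a) := by
    rw [tendsto_iff_dist_tendsto_zero]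
    apply squeeze_zero (fun k => dist_nonneg)
    · intro k
      show dist (q k) a ≤ ε / (k + 1)
      have h1 : q k - a = t k • wVec n + s k • eVec n := by rw [hqdef]; module
      rw [dist_eq_norm, h1]
      have h2 : ‖t k • wVec n + s k • eVec n‖ ≤ ‖t k • wVec n‖ + ‖s k • eVec n‖ :=
        norm_add_le _ _
      rw [norm_smul, norm_smul, aux_norm_eVec hpos,
        (by rw [aux_wVec_def hn, EuclideanSpace.norm_single]; norm_num : ‖wVec n‖ = 1)] at h2
      rw [Real.norm_eq_abs, Real.norm_eq_abs, abs_of_pos (htpos k), abs_of_pos (hspos k)] at h2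
      have : t k + s k ≤ 2 * t k := by linarith [hslt k]
      have h3 : (2:ℝ) * t k = ε / (k+1) := by rw [htdef]; field_simp
      simp only [mul_one] at h2
      linarith
    · have := tendsto_one_div_add_atTop_nhds_zero_nat.const_mul ε
      rw [mul_zero] at this
      convert this using 2 with k
      field_simp
  set qt : ℕ → HalfSpace n := fun k => ⟨q k, hqH k⟩ with hqtdef
  set F : Filter (HalfSpace n) := Filter.map qt Filter.atTop with hFdef
  have hFneBot : F.NeBot := Filter.map_neBot
  have hqtT : ∀ k, qt k ∈ (Subtype.val ⁻¹' tangentBall n a ε : Set (HalfSpace n)) := by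
    intro k
    rw [Set.mem_preimage]
    exact Or.inr (hbig k)
  have hFK : F ≤ Filter.principal K := by
    rw [Filter.le_principal_iff, hFdef, Filter.mem_map]
    exact Filter.Eventually.of_forall fun k => hVK (hTV (hqtT k))
  obtain ⟨x, hxK, hx⟩ := @IsCompact.exists_clusterPt (HalfSpace n) (tau n A) K hKcomp F hFneBot hFK
  -- identify the cluster point with ⟨a, ha'⟩ using the Euclidean topology
  have hnle : @nhds (HalfSpace n) (tau n A) x ≤ @nhds (HalfSpace n) _ x :=
    nhds_mono (aux_tau_le hpos A)
  have hxNB : Filter.NeBot (@nhds (HalfSpace n) (tau n A) x ⊓ F) := hx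
  have hx2 : @ClusterPt (HalfSpace n) _ x F :=
    Filter.NeBot.mono hxNB (inf_le_inf_right _ hnle)
  have hqttendsto : Filter.Tendsto qt Filter.atTop (nhds (⟨a, ha'⟩ : HalfSpace n)) := by
    rw [tendsto_subtype_rng]
    exact hqtendsto
  have hx2NB : Filter.NeBot (nhds x ⊓ F) := hx2
  have hxa : x = (⟨a, ha'⟩ : HalfSpace n) := by
    apply eq_of_nhds_neBot
    exact Filter.NeBot.mono hx2NB (inf_le_inf_left _ hqttendsto)
  subst hxa
  -- contradiction with the small tangent ball
  have hUopen : IsOpen[tau n A] (Subtype.val ⁻¹' tangentBall n a (ε / 2) : Set (HalfSpace n)) := by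
    apply GenerateOpen.basic
    rw [niemGen, Set.mem_union, Set.mem_union]
    exact Or.inr ⟨a, ⟨ha, haA⟩, ε / 2, by linarith, rfl⟩
  have hUnhds : (Subtype.val ⁻¹' tangentBall n a (ε / 2) : Set (HalfSpace n)) ∈
      @nhds (HalfSpace n) (tau n A) (⟨a, ha'⟩ : HalfSpace n) := by
    rw [@mem_nhds_iff (HalfSpace n) (tau n A) (⟨a, ha'⟩ : HalfSpace n) _]
    refine ⟨_, subset_rfl, hUopen, ?_⟩
    rw [Set.mem_preimage]
    exact aux_mem_tangentBall_self n a _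
  have hrange : Set.range qt ∈ F := by
    rw [hFdef, Filter.mem_map]
    exact Filter.Eventually.of_forall fun k => Set.mem_range_self k
  have hxNB2 : Filter.NeBot (@nhds (HalfSpace n) (tau n A) (⟨a, ha'⟩ : HalfSpace n) ⊓ F) := hx
  obtain ⟨y, hyU, hyR⟩ := hxNB2.nonempty_of_mem (Filter.inter_mem_inf hUnhds hrange)
  obtain ⟨k, rfl⟩ := hyR
  have : q k ∈ tangentBall n a (ε / 2) := hyU
  rcases this with h1 | h2
  · exact hqne k h1
  · exact hnothalf k h2

end Aux6

lemma aux_isClosed_halfSpace {n : ℕ} (hn : 0 < n) : IsClosed (HalfSpace n) := by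
  have hcont : Continuous (lastCoord n) := by
    have : lastCoord n = fun x => (EuclideanSpace.proj (⟨n - 1, Nat.sub_lt hn one_pos⟩ : Fin n)) x := by
      funext x
      rw [aux_lastCoord_def hn]
      rfl
    rw [this]
    exact (EuclideanSpace.proj _).continuous
  have : HalfSpace n = lastCoord n ⁻¹' Ici 0 := rfl
  rw [this]
  exact isClosed_Ici.preimage hcont


end

/-- For every `n ≥ 2` and `A ⊆ L`, the space `(X, τ(A))` is locally compact iff `A = L`,
equivalently iff `τ(A)` is the Euclidean subspace topology on `X`. -/
theorem tauA_locallyCompact_iff (n : ℕ) (hn : 2 ≤ n)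
    (A : Set (EuclideanSpace ℝ (Fin n))) (hA : A ⊆ Bdry n) :
    (@LocallyCompactSpace (HalfSpace n) (tau n A) ↔ A = Bdry n) ∧
    (@LocallyCompactSpace (HalfSpace n) (tau n A) ↔
      tau n A = (inferInstance : TopologicalSpace (HalfSpace n))) := by
  have hpos : 0 < n := by omega
  have heq : tau n (Bdry n) = (inferInstance : TopologicalSpace (HalfSpace n)) :=
    aux_tau_bdry hpos
  have hLCinst : LocallyCompactSpace (HalfSpace n) :=
    (aux_isClosed_halfSpace hpos).locallyCompactSpace
  have main : @LocallyCompactSpace (HalfSpace n) (tau n A) ↔ A = Bdry n := by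
    constructor
    · intro h
      by_contra hne
      obtain ⟨a, haB, haA⟩ := exists_of_ssubset (ssubset_of_subset_of_ne hA hne)
      exact aux_not_lc hn haB haA h
    · rintro rfl
      rw [heq]
      exact hLCinst
  exact ⟨main, ⟨fun hlc => by rw [main.1 hlc]; exact heq,
    fun h => by rw [h]; exact hLCinst⟩⟩
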